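/- Let g = r·a^k be an element of G = R ⋊_α C (r ∈ R, k ∈ Z). Then g commutes with all of its conjugates if and only if (1 - α^k)² = 0 and (1 - α)(1 - α^k)·r = 0 in R. -/

import Mathlib

/-- The action of a group `C` on `M` by additive automorphisms, packaged as a
homomorphism `C →* MulAut (Multiplicative M)`. -/
def sdAction (C M : Type*) [Group C] [AddCommGroup M] [DistribMulAction C M] :
    C →* MulAut (Multiplicative M) where
  toFun c := AddEquiv.toMultiplicative (DistribMulAction.toAddAut C M c)
  map_one' := by ext x; simp
  map_mul' c c' := by ext x; simp [mul_smul]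

private lemma stmt16.dvd_zpow_sub_one {R : Type*} [CommRing R] (u : Rˣ) (j : ℤ) :
    ((u : R) - 1) ∣ ((u ^ j : Rˣ) : R) - 1 := by
  induction j using Int.induction_on with
  | zero => simp
  | succ n ih =>
      have : ((u ^ ((n : ℤ) + 1) : Rˣ) : R) - 1 =
          ((u ^ (n : ℤ) : Rˣ) : R) * ((u : R) - 1) + (((u ^ (n : ℤ) : Rˣ) : R) - 1) := by
        rw [zpow_add_one, Units.val_mul]; ring
      rw [this]; exact dvd_add (Dvd.dvd.mul_left dvd_rfl _) ih
  | pred n ih =>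
      have : ((u ^ (-(n : ℤ) - 1) : Rˣ) : R) - 1 =
          -((u ^ (-(n : ℤ) - 1) : Rˣ) : R) * ((u : R) - 1) + (((u ^ (-(n : ℤ)) : Rˣ) : R) - 1) := by
        have : ((u ^ (-(n : ℤ) - 1) : Rˣ) : R) * (u : R) = ((u ^ (-(n : ℤ)) : Rˣ) : R) := by
          rw [← Units.val_mul, ← zpow_add_one, sub_add_cancel]
        linear_combination this
      rw [this]; exact dvd_add (Dvd.dvd.mul_left dvd_rfl _) ih

private lemma stmt16.mk_mul {R C : Type*} [CommRing R] [Group C] (χ : C →* Rˣ)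
    (x y : R) (c c' : C) :
    (⟨Multiplicative.ofAdd x, c⟩ : Multiplicative R ⋊[(sdAction Rˣ R).comp χ] C) *
      ⟨Multiplicative.ofAdd y, c'⟩ = ⟨Multiplicative.ofAdd (x + (χ c : R) * y), c * c'⟩ := rfl

private lemma stmt16.mk_inv {R C : Type*} [CommRing R] [Group C] (χ : C →* Rˣ)
    (x : R) (c : C) :
    (⟨Multiplicative.ofAdd x, c⟩ : Multiplicative R ⋊[(sdAction Rˣ R).comp χ] C)⁻¹ =
      ⟨Multiplicative.ofAdd ((χ c⁻¹ : Rˣ) * (-x)), c⁻¹⟩ := rfl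

private lemma stmt16.key {R C : Type*} [CommRing R] [Group C] (χ : C →* Rˣ)
    (r s : R) (c c' : C) (hcc : c * c' = c' * c) :
    ((⟨Multiplicative.ofAdd r, c⟩ : Multiplicative R ⋊[(sdAction Rˣ R).comp χ] C) *
      (⟨Multiplicative.ofAdd s, c'⟩ * ⟨Multiplicative.ofAdd r, c⟩ * ⟨Multiplicative.ofAdd s, c'⟩⁻¹) =
      (⟨Multiplicative.ofAdd s, c'⟩ * ⟨Multiplicative.ofAdd r, c⟩ * ⟨Multiplicative.ofAdd s, c'⟩⁻¹) *
      ⟨Multiplicative.ofAdd r, c⟩) ↔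
    (1 - (χ c : R)) * (((χ c' : R) - 1) * r + (1 - (χ c : R)) * s) = 0 := by
  rw [stmt16.mk_inv, stmt16.mk_mul, stmt16.mk_mul, stmt16.mk_mul, stmt16.mk_mul,
    SemidirectProduct.ext_iff]
  have h3 : c' * c * c'⁻¹ = c := by rw [← hcc, mul_assoc, mul_inv_cancel, mul_one]
  have h2 : (χ (c' * c) : R) * ((χ c'⁻¹ : Rˣ) : R) = (χ c : R) := by
    rw [← Units.val_mul, ← map_mul, h3]
  simp only [h3, and_true, Equiv.apply_eq_iff_eq, ← mul_assoc, h2]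
  constructor
  · intro h; linear_combination -h
  · intro h; linear_combination -h

/-- In `G = R ⋊_α C` with `C = ⟨a⟩` cyclic acting on `R` via `χ : C →* Rˣ`, an
element `g = r·a^k` commutes with all of its conjugates if and only if
`(1 - α^k)² = 0` and `(1 - α)(1 - α^k)·r = 0` in `R`. -/
theorem stmt_16 {R C : Type*} [CommRing R] [Group C]
    (a : C) (hC : ∀ c : C, c ∈ Subgroup.zpowers a)
    (χ : C →* Rˣ)
    (hR : Subring.closure (Set.range fun c : C => ((χ c : R))) = ⊤)
    (r : R) (k : ℤ)
    (g : Multiplicative R ⋊[(sdAction Rˣ R).comp χ] C)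
    (hg : g = ⟨Multiplicative.ofAdd r, a ^ k⟩) :
    (∀ h : Multiplicative R ⋊[(sdAction Rˣ R).comp χ] C,
        g * (h * g * h⁻¹) = (h * g * h⁻¹) * g) ↔
      ((1 - ((χ a ^ k : Rˣ) : R)) ^ 2 = 0 ∧
        (1 - ((χ a : Rˣ) : R)) * (1 - ((χ a ^ k : Rˣ) : R)) * r = 0) := by
  subst hg
  have hχk : (χ (a ^ k) : R) = ((χ a ^ k : Rˣ) : R) := by rw [map_zpow]
  set A : R := ((χ a ^ k : Rˣ) : R) with hA
  constructor
  · intro H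
    constructor
    · have := (stmt16.key χ r (1 : R) (a ^ k) 1 (by group)).mp
        (H ⟨Multiplicative.ofAdd (1 : R), 1⟩)
      rw [map_one, hχk] at this
      simp only [Units.val_one] at this
      linear_combination this
    · have := (stmt16.key χ r (0 : R) (a ^ k) a (by
          simpa using zpow_mul_comm a k 1)).mp
        (H ⟨Multiplicative.ofAdd (0 : R), a⟩)
      rw [hχk] at this
      linear_combination -this
  · rintro ⟨h1, h2⟩ h
    obtain ⟨j, hj⟩ := hC h.right
    have hh : h = ⟨Multiplicative.ofAdd (Multiplicative.toAdd h.left), a ^ j⟩ := by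
      cases h; simp [hj]
    rw [hh, stmt16.key χ r _ (a ^ k) (a ^ j) (zpow_mul_comm a k j), hχk, map_zpow]
    obtain ⟨t, ht⟩ := stmt16.dvd_zpow_sub_one (χ a) j
    rw [ht]
    set s := Multiplicative.toAdd h.left
    linear_combination s * h1 - t * h2
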